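/- For each state W of the region-abstracted transition system H, the set of successors { W' ∈ Λ* : W --a--> W' in H for some letter a } is finite and effectively computable from W and the automaton. -/

import Mathlib

/-- Clock constraints over a set `C` of clocks: comparisons with natural
number constants, closed under conjunction and negation. -/
inductive ClockConstraint (C : Type) : Type where
  | lt : C → ℕ → ClockConstraint C
  | le : C → ℕ → ClockConstraint C
  | conj : ClockConstraint C → ClockConstraint C → ClockConstraint C
  | neg : ClockConstraint C → ClockConstraint C

/-- Satisfaction of a clock constraint by a clock valuation. -/
def ClockConstraint.sat {C : Type} (v : C → NNReal) : ClockConstraint C → Prop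
  | .lt x c => (v x : ℝ) < (c : ℝ)
  | .le x c => (v x : ℝ) ≤ (c : ℝ)
  | .conj s t => s.sat v ∧ t.sat v
  | .neg s => ¬ s.sat v

/-- Positive boolean formulas over a set `X` of propositions. -/
inductive PosBool (X : Type) : Type where
  | atom : X → PosBool X
  | conj : PosBool X → PosBool X → PosBool X
  | disj : PosBool X → PosBool X → PosBool X

/-- Evaluation of a positive boolean formula under a valuation of atoms. -/
def PosBool.eval {X : Type} (f : X → Prop) : PosBool X → Prop
  | .atom x => f x
  | .conj b c => b.eval f ∧ c.eval f
  | .disj b c => b.eval f ∨ c.eval f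

/-- A positive boolean formula is disjunction-free (purely conjunctive). -/
def PosBool.orFree {X : Type} : PosBool X → Prop
  | .atom _ => True
  | .conj b c => b.orFree ∧ c.orFree
  | .disj _ _ => False

/-- A positive boolean formula is conjunction-free (purely disjunctive). -/
def PosBool.andFree {X : Type} : PosBool X → Prop
  | .atom _ => True
  | .conj _ _ => False
  | .disj b c => b.andFree ∧ c.andFree

open Classical in
/-- Reset the clocks in `r` to zero. -/
noncomputable def resetVal {C : Type} (v : C → NNReal) (r : Set C) : C → NNReal :=
  fun x => if x ∈ r then 0 else v x

/-- A (finite) timed word: each letter comes with the delay elapsed since the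
previous letter (a nonnegative real). -/
abbrev TimedWord (A : Type) : Type := List (A × NNReal)
/-- A one-clock alternating timed automaton whose transition formulas are in
disjunctive normal form: for each location and letter, a finite list of
pairs (guard, DNF), where a DNF is a nonempty list of disjuncts, each
disjunct a nonempty list of atoms `(target location, reset flag)`.  The
`partition` field is the Partition condition. -/
structure ATA1 (A Q : Type) where
  init : Q
  accept : Set Q
  trans : Q → A → List (ClockConstraint Unit × List (List (Q × Bool)))
  partition : ∀ (q : Q) (a : A) (v : NNReal),
    ∃! gb : ClockConstraint Unit × List (List (Q × Bool)),
      gb ∈ trans q a ∧ gb.1.sat (fun _ => v)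
  dnf_nonempty : ∀ (q : Q) (a : A), ∀ gb ∈ trans q a,
    gb.2 ≠ [] ∧ ∀ d ∈ gb.2, d ≠ []

/-- Acceptance of a timed word (delay time-stamps) from a configuration:
Eve picks a disjunct, and all its atoms must accept the rest of the word. -/
def ATA1.AccFrom {A Q : Type} (M : ATA1 A Q) : TimedWord A → Q → NNReal → Prop
  | [], q, _ => q ∈ M.accept
  | (a, t) :: w, q, v =>
      ∃ gb ∈ M.trans q a, gb.1.sat (fun _ => v + t) ∧
        ∃ d ∈ gb.2, ∀ qb ∈ d, M.AccFrom w qb.1 (if qb.2 then 0 else v + t)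

/-- The timed language of a one-clock DNF alternating timed automaton. -/
def ATA1.lang {A Q : Type} (M : ATA1 A Q) : Set (TimedWord A) :=
  { w | M.AccFrom w M.init 0 }

/-- One transition of the transition system `T`: states are finite sets of
configurations `(q, v)`; on `(a, t)` every configuration advances by `t`,
one disjunct of the (unique) applicable transition formula is chosen for
each configuration, and the resulting configurations are collected. -/
def ATA1.Tstep {A Q : Type} (M : ATA1 A Q) (a : A) (t : NNReal)
    (P P' : Set (Q × NNReal)) : Prop :=
  ∃ choice : Q × NNReal → List (Q × Bool),
    (∀ c ∈ P, ∃ gb ∈ M.trans c.1 a, gb.1.sat (fun _ => c.2 + t) ∧ choice c ∈ gb.2) ∧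
    P' = ⋃ c ∈ P, { c' | ∃ qb ∈ choice c, c' = (qb.1, if qb.2 then 0 else c.2 + t) }

/-- A transition of the untimed transition system `T̂`: a transition of `T`
with the time information erased. -/
def ATA1.UStep {A Q : Type} (M : ATA1 A Q) (a : A) (P P' : Set (Q × NNReal)) : Prop :=
  ∃ t : NNReal, M.Tstep a t P P'

/-- A state of `T` (or `T̂`) is bad iff all its locations are accepting. -/
def ATA1.Bad {A Q : Type} (M : ATA1 A Q) (P : Set (Q × NNReal)) : Prop :=
  ∀ c ∈ P, c.1 ∈ M.accept
/-- The largest constant occurring in a clock constraint. -/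
def ClockConstraint.maxConst {C : Type} : ClockConstraint C → ℕ
  | .lt _ c => c
  | .le _ c => c
  | .conj s t => max s.maxConst t.maxConst
  | .neg s => s.maxConst

/-- The largest constant `c_max` occurring in the transition function. -/
noncomputable def ATA1.cmax {A Q : Type} [Fintype A] [Fintype Q] (M : ATA1 A Q) : ℕ :=
  Finset.univ.sup fun q : Q => Finset.univ.sup fun a : A =>
    ((M.trans q a).map fun gb => gb.1.maxConst).foldr max 0

open Classical in
/-- The index of the region of a clock value `v`, for maximal constant `K`:
the regions `{0}, (0,1), {1}, (1,2), …, {K}, (K,∞)` are numbered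
`0, 1, …, 2K, 2K+1`. -/
noncomputable def regIdx (K : ℕ) (v : NNReal) : ℕ :=
  if (K : NNReal) < v then 2 * K + 1
  else if (⌊v⌋₊ : NNReal) = v then 2 * ⌊v⌋₊ else 2 * ⌊v⌋₊ + 1

/-- `W = H(P)`: the word `W` over `Λ = 𝒫(Q × reg)` is obtained from the set
`P` of configurations by replacing each `(q, v)` by `(q, reg v, fract v)`,
sorting by the fractional parts, grouping configurations with equal
fractional parts into one letter, and forgetting the fractional parts. -/
def IsAbstraction {Q : Type} (K : ℕ) (P : Set (Q × NNReal))
    (W : List (Set (Q × ℕ))) : Prop :=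
  ∃ fs : List ℝ,
    fs.Pairwise (· < ·) ∧
    (∀ f : ℝ, f ∈ fs ↔ ∃ c ∈ P, Int.fract (c.2 : ℝ) = f) ∧
    W.length = fs.length ∧
    ∀ (i : ℕ) (hw : i < W.length) (hi : i < fs.length),
      W.get ⟨i, hw⟩ =
        { qr | ∃ c ∈ P, Int.fract (c.2 : ℝ) = fs.get ⟨i, hi⟩ ∧ qr = (c.1, regIdx K c.2) }

/-- A transition (labelled by letter `a`) of the region-abstracted transition
system `H`: there are states `P`, `P'` of `T̂` with a transition
`P --a--> P'` whose abstractions are the two given words. -/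
def HStep {A Q : Type} [Fintype A] [Fintype Q] (M : ATA1 A Q) (a : A)
    (W W' : List (Set (Q × ℕ))) : Prop :=
  ∃ P P' : Set (Q × NNReal), P.Finite ∧
    IsAbstraction M.cmax P W ∧ IsAbstraction M.cmax P' W' ∧ M.UStep a P P'

/-- A state of `H` is bad iff every location occurring in one of its letters
is accepting. -/
def BadW {Q : Type} (F : Set Q) (W : List (Set (Q × ℕ))) : Prop :=
  ∀ s ∈ W, ∀ qr ∈ s, qr.1 ∈ F

/-- The monotone domination ordering on words over a powerset alphabet:
`W₁ ⪯ W₂` iff there is a strictly increasing map of positions along which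
the letters of `W₁` are included in those of `W₂`. -/
def MonDom {X : Type} (W₁ W₂ : List (Set X)) : Prop :=
  ∃ f : Fin W₁.length → Fin W₂.length,
    StrictMono f ∧ ∀ i : Fin W₁.length, W₁.get i ⊆ W₂.get (f i)

lemma regIdx_le (K : ℕ) (v : NNReal) : regIdx K v ≤ 2 * K + 1 := by
  unfold regIdx
  have h : ¬ (K : NNReal) < v → ⌊v⌋₊ ≤ K := fun h1 => by
    calc ⌊v⌋₊ ≤ ⌊(K : NNReal)⌋₊ := Nat.floor_le_floor (le_of_not_gt h1)
    _ = K := Nat.floor_natCast K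
  split_ifs with h1 h2
  · omega
  · have := h h1; omega
  · have := h h1; omega

lemma finite_lists {X : Type*} {s : Set X} (hs : s.Finite) (n : ℕ) :
    {l : List X | l.length ≤ n ∧ ∀ x ∈ l, x ∈ s}.Finite := by
  induction n with
  | zero =>
    apply Set.Finite.subset (Set.finite_singleton ([] : List X))
    rintro l ⟨hl, -⟩
    simp [List.length_eq_zero_iff.mp (Nat.le_zero.mp hl)]
  | succ n ih =>
    apply Set.Finite.subset
      ((Set.finite_singleton ([] : List X)).union
        (Set.Finite.image (fun p : X × List X => p.1 :: p.2) (hs.prod ih)))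
    rintro l ⟨hl, hmem⟩
    cases l with
    | nil => left; rfl
    | cons x l =>
      right
      exact ⟨(x, l), ⟨hmem x (by simp), by simpa using hl,
        fun y hy => hmem y (by simp [hy])⟩, rfl⟩

/-- For each state `W` of the region-abstracted transition
system `H`, the set of its successors is finite, and indeed can be presented
by an explicit finite list. -/
theorem region_system_finitely_branching
    {A Q : Type} [Fintype A] [Fintype Q] (M : ATA1 A Q)
    (W : List (Set (Q × ℕ))) :
    { W' : List (Set (Q × ℕ)) | ∃ a : A, HStep M a W W' }.Finite ∧
    ∃ l : List (List (Set (Q × ℕ))),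
      ∀ W' : List (Set (Q × ℕ)), (∃ a : A, HStep M a W W') ↔ W' ∈ l := by
  classical
  set K := M.cmax with hK
  set T : Set (Q × ℕ) := {p | p.2 ≤ 2 * K + 1} with hT
  have hTfin : T.Finite := by
    have hTeq : T = (Set.univ : Set Q) ×ˢ Set.Iic (2 * K + 1) := by
      ext p; simp [hT, Set.mem_prod]
    rw [hTeq]
    exact Set.finite_univ.prod (Set.finite_Iic _)
  have hSfin : {s : Set (Q × ℕ) | s ⊆ T}.Finite := hTfin.finite_subsets
  have key : ∀ W' : List (Set (Q × ℕ)), (∃ a : A, HStep M a W W') →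
      W'.length ≤ W.length + 1 ∧ ∀ s ∈ W', s ⊆ T := by
    rintro W' ⟨a, P, P', hPfin, ⟨fs, hsort, hmemiff, hlen, hget⟩,
      ⟨fs', hsort', hmemiff', hlen', hget'⟩, t, choice, hchoice, hP'⟩
    constructor
    · -- length bound
      rw [hlen', hlen]
      set g : ℝ → ℝ := fun f => Int.fract (f + (t : ℝ)) with hg
      set L : List ℝ := (0 : ℝ) :: fs.map g with hL
      have hsub : ∀ f ∈ fs', f ∈ L := by
        intro f hf
        obtain ⟨c', hc', hfr⟩ := (hmemiff' f).mp hf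
        rw [hP'] at hc'
        simp only [Set.mem_iUnion, Set.mem_setOf_eq] at hc'
        obtain ⟨c, hc, qb, hqb, rfl⟩ := hc'
        by_cases hb : qb.2 = true
        · simp [hb] at hfr
          have hf0 : f = 0 := by simpa using hfr.symm
          simp [hL, hf0]
        · simp [hb] at hfr
          -- hfr : Int.fract ((c.2 + t : NNReal) : ℝ) = f
          have h1 : ((c.2 + t : NNReal) : ℝ) = (c.2 : ℝ) + (t : ℝ) := by push_cast; ring
          have h2 : (c.2 : ℝ) + (t : ℝ)
              = (⌊(c.2 : ℝ)⌋ : ℝ) + (Int.fract (c.2 : ℝ) + (t : ℝ)) := by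
            rw [← add_assoc, Int.floor_add_fract]
          have h3 : f = g (Int.fract (c.2 : ℝ)) := by
            rw [← hfr, h2, Int.fract_intCast_add]
          have hmemf : Int.fract (c.2 : ℝ) ∈ fs := (hmemiff _).mpr ⟨c, hc, rfl⟩
          rw [h3, hL]
          exact List.mem_cons_of_mem _ (List.mem_map_of_mem (f := g) hmemf)
      have hnd : fs'.Nodup := hsort'.nodup
      calc fs'.length = fs'.toFinset.card := (List.toFinset_card_of_nodup hnd).symm
        _ ≤ L.toFinset.card := Finset.card_le_card (fun x hx => by
            rw [List.mem_toFinset] at hx ⊢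
            exact hsub x hx)
        _ ≤ L.length := List.toFinset_card_le L
        _ = fs.length + 1 := by simp [hL]
    · -- letter bound
      intro s hs
      obtain ⟨⟨i, hi⟩, rfl⟩ := List.mem_iff_get.mp hs
      rw [hget' i hi (hlen' ▸ hi)]
      rintro qr ⟨c, hc, hf, rfl⟩
      exact regIdx_le K c.2
  have hfin : { W' : List (Set (Q × ℕ)) | ∃ a : A, HStep M a W W' }.Finite := by
    apply Set.Finite.subset (finite_lists hSfin (W.length + 1))
    intro W' h
    exact key W' h
  refine ⟨hfin, hfin.toFinset.toList, fun W' => ?_⟩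
  rw [Finset.mem_toList, Set.Finite.mem_toFinset hfin]
  exact Iff.rfl
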